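/- arXiv:1810.06829 — 2 statements merged into one kernel-verified Lean document; each statement's English description precedes it below -/
import Mathlib

section
/- For every n ≥ 1 and every x ∈ [0,1], the first central moment of the modified Durrmeyer operator satisfies D_n^{M,1}(t − x; x) = (1 − 2x)(2a_1(n) + 3a_0(n))/(n+2). -/
open Filter Topology

/-- Bernstein basis polynomial `p_{n,k}(x)`, zero when `k < 0` or `k > n`. -/
noncomputable def bern (n : ℕ) (k : ℤ) (x : ℝ) : ℝ :=
  if 0 ≤ k ∧ k ≤ (n : ℤ) then (n.choose k.toNat : ℝ) * x ^ k.toNat * (1 - x) ^ (n - k.toNat)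
  else 0

/-- Modified Bernstein basis `p_{n,k}^{M,1}(x)` of Khosravian-Arab et al. -/
noncomputable def pM1 (a0 a1 : ℕ → ℝ) (n : ℕ) (k : ℤ) (x : ℝ) : ℝ :=
  (a1 n * x + a0 n) * bern (n - 1) k x + (a1 n * (1 - x) + a0 n) * bern (n - 1) (k - 1) x

/-- First-order modified Durrmeyer operator `D_n^{M,1}(f;x)`. -/
noncomputable def DM1 (a0 a1 : ℕ → ℝ) (n : ℕ) (f : ℝ → ℝ) (x : ℝ) : ℝ :=
  ((n : ℝ) + 1) * ∑ k ∈ Finset.range (n + 1),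
    pM1 a0 a1 n k x * ∫ t in (0:ℝ)..1, bern n k t * f t

lemma beta_key (a b : ℕ) :
    ((a:ℝ)+1) * ∫ t in (0:ℝ)..1, t^a * (1-t)^(b+1)
      = ((b:ℝ)+1) * ∫ t in (0:ℝ)..1, t^(a+1) * (1-t)^b := by
  have hF : ∀ t : ℝ, HasDerivAt (fun t : ℝ => t^(a+1) * (1-t)^(b+1))
      (((a:ℝ)+1) * (t^a * (1-t)^(b+1)) - ((b:ℝ)+1) * (t^(a+1) * (1-t)^b)) t := by
    intro t
    have h1 : HasDerivAt (fun t : ℝ => t^(a+1)) (((a:ℝ)+1) * t^a) t := by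
      simpa using (hasDerivAt_pow (a+1) t)
    have h2 : HasDerivAt (fun t : ℝ => (1-t)^(b+1)) (-(((b:ℝ)+1) * (1-t)^b)) t := by
      have := (hasDerivAt_pow (b+1) (1 - t)).comp t
        (((hasDerivAt_id t).const_sub 1))
      refine this.congr_deriv ?_
      push_cast; ring
    have := h1.mul h2
    refine this.congr_deriv ?_
    ring
  have h0 : (∫ t in (0:ℝ)..1,
      (((a:ℝ)+1) * (t^a * (1-t)^(b+1)) - ((b:ℝ)+1) * (t^(a+1) * (1-t)^b))) = 0 := by
    rw [intervalIntegral.integral_eq_sub_of_hasDerivAt (fun t _ => hF t)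
      ((Continuous.intervalIntegrable (by fun_prop) _ _))]
    simp
  rw [intervalIntegral.integral_sub ((Continuous.intervalIntegrable (by fun_prop) _ _))
      ((Continuous.intervalIntegrable (by fun_prop) _ _)),
    intervalIntegral.integral_const_mul, intervalIntegral.integral_const_mul] at h0
  linarith

lemma beta_int : ∀ (b a : ℕ), (∫ t in (0:ℝ)..1, t^a * (1-t)^b)
    = (a.factorial * b.factorial : ℝ) / ((a+b+1).factorial) := by
  intro b
  induction b with
  | zero =>
    intro a
    have hfa : (a.factorial:ℝ) ≠ 0 := by exact_mod_cast Nat.factorial_ne_zero _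
    simp [integral_pow, Nat.factorial_succ]
    push_cast
    field_simp
  | succ b ih =>
    intro a
    have hk := beta_key a b
    rw [ih (a+1)] at hk
    have ha : (a:ℝ)+1 ≠ 0 := by positivity
    have h1 : ((a+1).factorial : ℝ) = ((a:ℝ)+1) * a.factorial := by
      rw [Nat.factorial_succ]; push_cast; ring
    have h2 : ((b+1).factorial : ℝ) = ((b:ℝ)+1) * b.factorial := by
      rw [Nat.factorial_succ]; push_cast; ring
    have h3 : a + 1 + b + 1 = a + (b+1) + 1 := by omega
    rw [h3, h1] at hk
    rw [h2]
    have hf : ((a + (b+1) + 1).factorial : ℝ) ≠ 0 := by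
      exact_mod_cast Nat.factorial_ne_zero _
    field_simp at hk ⊢
    exact hk

lemma integral_bern (n k : ℕ) (hk : k ≤ n) (x : ℝ) :
    (∫ t in (0:ℝ)..1, bern n (k:ℤ) t * (t - x))
      = ((k:ℝ)+1)/(((n:ℝ)+1)*((n:ℝ)+2)) - x/((n:ℝ)+1) := by
  have hb : ∀ t : ℝ, bern n (k:ℤ) t * (t - x)
      = (n.choose k : ℝ) * (t^(k+1) * (1-t)^(n-k))
        - ((n.choose k : ℝ) * x) * (t^k * (1-t)^(n-k)) := by
    intro t
    simp only [bern, Int.toNat_natCast, Int.natCast_nonneg, true_and,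
      if_pos (by exact_mod_cast hk : (k:ℤ) ≤ (n:ℤ))]
    ring
  rw [intervalIntegral.integral_congr (fun t _ => hb t),
    intervalIntegral.integral_sub
      ((Continuous.intervalIntegrable (by fun_prop) _ _))
      ((Continuous.intervalIntegrable (by fun_prop) _ _)),
    intervalIntegral.integral_const_mul, intervalIntegral.integral_const_mul,
    beta_int, beta_int]
  have h1 : k + 1 + (n - k) + 1 = n + 2 := by omega
  have h2 : k + (n - k) + 1 = n + 1 := by omega
  rw [h1, h2]
  have hc : (n.choose k : ℝ) * (k.factorial * (n-k).factorial) = n.factorial := by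
    push_cast [← Nat.choose_mul_factorial_mul_factorial hk]; ring
  have hk1 : ((k+1).factorial : ℝ) = ((k:ℝ)+1) * k.factorial := by
    rw [Nat.factorial_succ]; push_cast; ring
  have hn1 : ((n+1).factorial : ℝ) = ((n:ℝ)+1) * n.factorial := by
    rw [Nat.factorial_succ]; push_cast; ring
  have hn2 : ((n+2).factorial : ℝ) = ((n:ℝ)+2) * (((n:ℝ)+1) * n.factorial) := by
    rw [show n+2 = (n+1)+1 from rfl, Nat.factorial_succ, Nat.factorial_succ]; push_cast; ring
  have hnf : (n.factorial : ℝ) ≠ 0 := by exact_mod_cast Nat.factorial_ne_zero _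
  have hn1' : (n:ℝ)+1 ≠ 0 := by positivity
  have hn2' : (n:ℝ)+2 ≠ 0 := by positivity
  rw [hk1, hn1, hn2]
  field_simp
  linear_combination (((k:ℝ)+1)-((n:ℝ)+2)*x) * hc

lemma bern_eval (m ν : ℕ) (h : ν ≤ m) (x : ℝ) :
    bern m (ν:ℤ) x = (bernsteinPolynomial ℝ m ν).eval x := by
  simp [bern, bernsteinPolynomial, h, (by exact_mod_cast h : (ν:ℤ) ≤ (m:ℤ))]

lemma bern_sum (m : ℕ) (x : ℝ) :
    ∑ j ∈ Finset.range (m+1), bern m (j:ℤ) x = 1 := by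
  have := congrArg (Polynomial.eval x) (bernsteinPolynomial.sum ℝ m)
  simpa [Polynomial.eval_finset_sum,
    fun j (hj : j ∈ Finset.range (m+1)) => bern_eval m j (Finset.mem_range_succ_iff.mp hj) x]
    using (Finset.sum_congr rfl
      (fun j hj => bern_eval m j (Finset.mem_range_succ_iff.mp hj) x)).trans
      (by simpa [Polynomial.eval_finset_sum] using this)

lemma bern_sum_mul (m : ℕ) (x : ℝ) :
    ∑ j ∈ Finset.range (m+1), (j:ℝ) * bern m (j:ℤ) x = m * x := by
  have := congrArg (Polynomial.eval x) (bernsteinPolynomial.sum_smul ℝ m)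
  rw [Polynomial.eval_finset_sum] at this
  simp only [Polynomial.eval_smul, nsmul_eq_mul, Polynomial.eval_mul, Polynomial.eval_natCast,
    Polynomial.eval_X] at this
  calc ∑ j ∈ Finset.range (m+1), (j:ℝ) * bern m (j:ℤ) x
      = ∑ j ∈ Finset.range (m+1), (j:ℝ) * (bernsteinPolynomial ℝ m j).eval x :=
        Finset.sum_congr rfl (fun j hj => by
          rw [bern_eval m j (Finset.mem_range_succ_iff.mp hj) x])
    _ = m * x := by simpa using this

noncomputable def cfun (m : ℕ) (x : ℝ) (k : ℕ) : ℝ :=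
  ((k:ℝ)+1)/(((m:ℝ)+2)*((m:ℝ)+3)) - x/((m:ℝ)+2)

theorem DM1_central_moment_one (a0 a1 : ℕ → ℝ) (n : ℕ) (hn : 1 ≤ n)
    (x : ℝ) (hx : x ∈ Set.Icc (0:ℝ) 1) :
    DM1 a0 a1 n (fun t => t - x) x
      = (1 - 2 * x) * (2 * a1 n + 3 * a0 n) / ((n : ℝ) + 2) := by
  obtain ⟨m, rfl⟩ : ∃ m, n = m + 1 := ⟨n - 1, by omega⟩
  set A := a1 (m+1) * x + a0 (m+1) with hA
  set B := a1 (m+1) * (1 - x) + a0 (m+1) with hB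
  rw [DM1]
  have hint : ∀ k ∈ Finset.range (m+2),
      pM1 a0 a1 (m+1) (k:ℤ) x * (∫ t in (0:ℝ)..1, bern (m+1) (k:ℤ) t * (t - x))
        = pM1 a0 a1 (m+1) (k:ℤ) x * cfun m x k := by
    intro k hk
    have hk' : k ≤ m+1 := by have := Finset.mem_range.mp hk; omega
    rw [integral_bern (m+1) k hk' x, cfun]
    push_cast
    ring_nf
  rw [Finset.sum_congr rfl hint]
  have hsplit : ∀ k : ℕ, pM1 a0 a1 (m+1) (k:ℤ) x
      = A * bern m (k:ℤ) x + B * bern m ((k:ℤ)-1) x := by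
    intro k; rfl
  have hsum : ∑ k ∈ Finset.range (m+2), pM1 a0 a1 (m+1) (k:ℤ) x * cfun m x k
      = (∑ k ∈ Finset.range (m+2), A * bern m (k:ℤ) x * cfun m x k)
        + ∑ k ∈ Finset.range (m+2), B * bern m ((k:ℤ)-1) x * cfun m x k := by
    rw [← Finset.sum_add_distrib]
    exact Finset.sum_congr rfl (fun k _ => by rw [hsplit]; ring)
  rw [hsum]
  have hlast : bern m ((m+1 : ℕ):ℤ) x = 0 := by
    simp [bern]
  have e1 : ∑ k ∈ Finset.range (m+2), A * bern m (k:ℤ) x * cfun m x k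
      = A * ∑ j ∈ Finset.range (m+1), bern m (j:ℤ) x * cfun m x j := by
    rw [Finset.sum_range_succ, hlast, Finset.mul_sum]
    simp [mul_assoc]
  have e2 : ∑ k ∈ Finset.range (m+2), B * bern m ((k:ℤ)-1) x * cfun m x k
      = B * ∑ j ∈ Finset.range (m+1), bern m (j:ℤ) x * cfun m x (j+1) := by
    rw [Finset.sum_range_succ']
    have h0 : bern m (((0:ℕ):ℤ)-1) x = 0 := by simp [bern]
    rw [h0, Finset.mul_sum]
    simp only [mul_zero, zero_mul, add_zero]
    refine Finset.sum_congr rfl (fun j hj => ?_)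
    have : ((j+1 : ℕ):ℤ) - 1 = (j:ℤ) := by push_cast; ring
    rw [this]; ring
  rw [e1, e2]
  have hS0 := bern_sum m x
  have hS1 := bern_sum_mul m x
  have s1 : ∑ j ∈ Finset.range (m+1), bern m (j:ℤ) x * cfun m x j
      = ((m:ℝ)*x + 1)/(((m:ℝ)+2)*((m:ℝ)+3)) - x/((m:ℝ)+2) := by
    have h : ∀ j : ℕ, bern m (j:ℤ) x * cfun m x j
        = ((j:ℝ) * bern m (j:ℤ) x) * (1/(((m:ℝ)+2)*((m:ℝ)+3)))
          + bern m (j:ℤ) x * (1/(((m:ℝ)+2)*((m:ℝ)+3)) - x/((m:ℝ)+2)) := by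
      intro j; rw [cfun]; ring
    rw [Finset.sum_congr rfl (fun j _ => h j), Finset.sum_add_distrib,
      ← Finset.sum_mul, ← Finset.sum_mul, hS0, hS1]
    ring
  have s2 : ∑ j ∈ Finset.range (m+1), bern m (j:ℤ) x * cfun m x (j+1)
      = ((m:ℝ)*x + 2)/(((m:ℝ)+2)*((m:ℝ)+3)) - x/((m:ℝ)+2) := by
    have h : ∀ j : ℕ, bern m (j:ℤ) x * cfun m x (j+1)
        = ((j:ℝ) * bern m (j:ℤ) x) * (1/(((m:ℝ)+2)*((m:ℝ)+3)))
          + bern m (j:ℤ) x * (2/(((m:ℝ)+2)*((m:ℝ)+3)) - x/((m:ℝ)+2)) := by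
      intro j; rw [cfun]; push_cast; ring
    rw [Finset.sum_congr rfl (fun j _ => h j), Finset.sum_add_distrib,
      ← Finset.sum_mul, ← Finset.sum_mul, hS0, hS1]
    ring
  rw [s1, s2]
  have h2 : ((m:ℝ)+2) ≠ 0 := by positivity
  have h3 : ((m:ℝ)+3) ≠ 0 := by positivity
  rw [hA, hB]
  push_cast
  field_simp
  ring
end

section
/- For every n ≥ 1 and every x ∈ [0,1], the fourth central moment of the modified Durrmeyer operator satisfies D_n^{M,1}((t − x)^4; x) = 12/((n+2)(n+3)(n+4)(n+5)) · { (1−x)^2 x^2 (2a_0(n) + a_1(n)) n^2 + 3(1−x)x(15a_1(n)x^2 + 22x^2 a_0(n) − 15a_1(n)x − 22a_0(n)x + 6a_0(n) + 4a_1(n)) n + 10a_1(n) + 12a_0(n) − 68a_1(n)x + 124x^4 a_0(n) + 202x^2 a_0(n) + 114x^4 a_1(n) + 182a_1(n)x^2 − 78a_0(n)x − 228a_1(n)x^3 − 248a_0(n)x^3 }. -/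
open Filter Topology

section DM1aux
open Finset intervalIntegral

lemma contPoly (a b : ℕ) : Continuous (fun t : ℝ => t ^ a * (1 - t) ^ b) := by
  fun_prop

lemma beta_nat : ∀ (b a : ℕ), (∫ t in (0:ℝ)..1, t ^ a * (1 - t) ^ b)
    = (a.factorial * b.factorial : ℝ) / (a + b + 1).factorial := by
  intro b
  induction b with
  | zero =>
    intro a
    simp only [pow_zero, mul_one, integral_pow]
    have h1 : ((a:ℝ)+1) ≠ 0 := by positivity
    have h2 : (a.factorial : ℝ) ≠ 0 := by positivity
    rw [show a + 0 + 1 = a + 1 from rfl, Nat.factorial_succ]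
    push_cast
    rw [one_pow, zero_pow (by omega : a+1 ≠ 0)]
    field_simp
    simp
  | succ b ih =>
    intro a
    have hder : ∀ t : ℝ, HasDerivAt (fun t : ℝ => t ^ (a+1) * (1 - t) ^ (b+1))
        (((a:ℝ)+1) * t ^ a * (1 - t) ^ (b+1) - ((b:ℝ)+1) * t ^ (a+1) * (1 - t) ^ b) t := by
      intro t
      have h1 : HasDerivAt (fun t : ℝ => t ^ (a+1)) (((a:ℝ)+1) * t ^ a) t := by
        simpa using hasDerivAt_pow (a+1) t
      have h2 : HasDerivAt (fun t : ℝ => (1 - t) ^ (b+1)) (((b:ℝ)+1) * (1 - t) ^ b * (-1)) t := by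
        have hin : HasDerivAt (fun t : ℝ => 1 - t) (-1) t := (hasDerivAt_id t).const_sub 1
        simpa using hin.fun_pow (b+1)
      have := h1.fun_mul h2
      exact this.congr_deriv (by ring)
    have hFTC := intervalIntegral.integral_eq_sub_of_hasDerivAt (a := (0:ℝ)) (b := (1:ℝ))
      (fun t _ => hder t)
      (by apply Continuous.intervalIntegrable; fun_prop)
    have hz : (∫ t in (0:ℝ)..1, (((a:ℝ)+1) * t ^ a * (1 - t) ^ (b+1)
        - ((b:ℝ)+1) * t ^ (a+1) * (1 - t) ^ b)) = 0 := by
      rw [hFTC]; norm_num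
    rw [intervalIntegral.integral_sub (by apply Continuous.intervalIntegrable; fun_prop)
        (by apply Continuous.intervalIntegrable; fun_prop)] at hz
    have e1 : (∫ t in (0:ℝ)..1, ((a:ℝ)+1) * t ^ a * (1 - t) ^ (b+1))
        = ((a:ℝ)+1) * ∫ t in (0:ℝ)..1, t ^ a * (1 - t) ^ (b+1) := by
      rw [← intervalIntegral.integral_const_mul]
      congr 1; ext t; ring
    have e2 : (∫ t in (0:ℝ)..1, ((b:ℝ)+1) * t ^ (a+1) * (1 - t) ^ b)
        = ((b:ℝ)+1) * ∫ t in (0:ℝ)..1, t ^ (a+1) * (1 - t) ^ b := by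
      rw [← intervalIntegral.integral_const_mul]
      congr 1; ext t; ring
    rw [e1, e2, ih (a+1), sub_eq_zero] at hz
    have ha : ((a:ℝ)+1) ≠ 0 := by positivity
    have key : (∫ t in (0:ℝ)..1, t ^ a * (1 - t) ^ (b+1))
        = ((b:ℝ)+1) * ((((a+1).factorial : ℝ) * b.factorial) / (a+1+b+1).factorial) / ((a:ℝ)+1) := by
      field_simp at hz ⊢
      linarith [hz]
    rw [key]
    have h3 : ((a+1+b+1).factorial : ℝ) ≠ 0 := by positivity
    have h4 : ((a+(b+1)+1).factorial : ℝ) ≠ 0 := by positivity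
    have e5 : a+(b+1)+1 = a+1+b+1 := by omega
    rw [e5, Nat.factorial_succ (a), Nat.factorial_succ b]
    push_cast
    field_simp

lemma bern_nat (n k : ℕ) (hk : k ≤ n) (t : ℝ) :
    bern n (k : ℤ) t = (n.choose k : ℝ) * t ^ k * (1 - t) ^ (n - k) := by
  unfold bern
  rw [if_pos ⟨Int.natCast_nonneg k, by exact_mod_cast hk⟩]
  simp

lemma bern_big (n k : ℕ) (h : n < k) (t : ℝ) : bern n (k : ℤ) t = 0 := by
  unfold bern
  rw [if_neg]
  rintro ⟨-, h2⟩
  exact absurd (by exact_mod_cast h2) (not_le.mpr h)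

lemma fact_ratio (k : ℕ) : ∀ j : ℕ, ((k + j).factorial : ℝ)
    = k.factorial * ∏ i ∈ Finset.range j, ((k : ℝ) + 1 + i) := by
  intro j
  induction j with
  | zero => simp
  | succ j ih =>
    rw [Finset.prod_range_succ, ← mul_assoc, ← ih, show k + (j+1) = (k+j)+1 from rfl,
      Nat.factorial_succ]
    push_cast
    ring

lemma int_bern (n k j : ℕ) (hk : k ≤ n) :
    (∫ t in (0:ℝ)..1, bern n (k : ℤ) t * t ^ j)
    = (∏ i ∈ Finset.range j, ((k:ℝ) + 1 + i)) / (∏ i ∈ Finset.range (j+1), ((n:ℝ) + 1 + i)) := by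
  have hpt : ∀ t : ℝ, bern n (k:ℤ) t * t ^ j = (n.choose k : ℝ) * (t ^ (k+j) * (1-t) ^ (n-k)) := by
    intro t
    rw [bern_nat n k hk]
    ring
  simp only [hpt]
  rw [intervalIntegral.integral_const_mul, beta_nat, show k + j + (n-k) + 1 = n + (j+1) by omega]
  have hf1 := fact_ratio k j
  have hf2 := fact_ratio n (j+1)
  have hc : (n.choose k : ℝ) * k.factorial * (n-k).factorial = n.factorial := by
    exact_mod_cast congrArg (Nat.cast : ℕ → ℝ) (Nat.choose_mul_factorial_mul_factorial hk)
  have hne1 : ((n + (j+1)).factorial : ℝ) ≠ 0 := by positivity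
  have hne2 : (∏ i ∈ Finset.range (j+1), ((n:ℝ) + 1 + i)) ≠ 0 := by
    apply Finset.prod_ne_zero_iff.mpr
    intro i _
    positivity
  rw [mul_div_assoc'] ; rw [div_eq_div_iff hne1 hne2, hf1, hf2]
  have hkf : (k.factorial : ℝ) ≠ 0 := by positivity
  set Pk := ∏ i ∈ Finset.range j, ((k:ℝ) + 1 + i)
  set Pn := ∏ i ∈ Finset.range (j+1), ((n:ℝ) + 1 + i)
  linear_combination (Pk * Pn) * hc

lemma bern_cont (n : ℕ) (k : ℤ) : Continuous (fun t : ℝ => bern n k t) := by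
  unfold bern
  split
  · fun_prop
  · fun_prop

lemma bern_intgj (n : ℕ) (k : ℤ) (j : ℕ) :
    IntervalIntegrable (fun t : ℝ => bern n k t * t ^ j) MeasureTheory.volume 0 1 :=
  (Continuous.mul (bern_cont n k) (continuous_pow j)).intervalIntegrable 0 1

lemma int_bern4 (n k : ℕ) (hk : k ≤ n) (x : ℝ) :
    (∫ t in (0:ℝ)..1, bern n (k : ℤ) t * (t - x) ^ 4)
    = (((k:ℝ)+1)*((k:ℝ)+2)*((k:ℝ)+3)*((k:ℝ)+4)
       - 4*x*(((k:ℝ)+1)*((k:ℝ)+2)*((k:ℝ)+3))*((n:ℝ)+5)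
       + 6*x^2*(((k:ℝ)+1)*((k:ℝ)+2))*(((n:ℝ)+4)*((n:ℝ)+5))
       - 4*x^3*((k:ℝ)+1)*(((n:ℝ)+3)*((n:ℝ)+4)*((n:ℝ)+5))
       + x^4*(((n:ℝ)+2)*((n:ℝ)+3)*((n:ℝ)+4)*((n:ℝ)+5)))
      / (((n:ℝ)+1)*((n:ℝ)+2)*((n:ℝ)+3)*((n:ℝ)+4)*((n:ℝ)+5)) := by
  have hsplit : (∫ t in (0:ℝ)..1, bern n (k : ℤ) t * (t - x) ^ 4)
      = (∫ t in (0:ℝ)..1, bern n (k:ℤ) t * t ^ 4)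
        + (-(4*x)) * (∫ t in (0:ℝ)..1, bern n (k:ℤ) t * t ^ 3)
        + (6*x^2) * (∫ t in (0:ℝ)..1, bern n (k:ℤ) t * t ^ 2)
        + (-(4*x^3)) * (∫ t in (0:ℝ)..1, bern n (k:ℤ) t * t ^ 1)
        + (x^4) * (∫ t in (0:ℝ)..1, bern n (k:ℤ) t * t ^ 0) := by
    rw [← intervalIntegral.integral_const_mul, ← intervalIntegral.integral_const_mul,
      ← intervalIntegral.integral_const_mul, ← intervalIntegral.integral_const_mul,
      ← intervalIntegral.integral_add (bern_intgj n k 4) ((bern_intgj n k 3).const_mul _),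
      ← intervalIntegral.integral_add (by
          exact (bern_intgj n k 4).add ((bern_intgj n k 3).const_mul _))
        ((bern_intgj n k 2).const_mul _),
      ← intervalIntegral.integral_add (by
          exact ((bern_intgj n k 4).add ((bern_intgj n k 3).const_mul _)).add
            ((bern_intgj n k 2).const_mul _))
        ((bern_intgj n k 1).const_mul _),
      ← intervalIntegral.integral_add (by
          exact (((bern_intgj n k 4).add ((bern_intgj n k 3).const_mul _)).add
            ((bern_intgj n k 2).const_mul _)).add ((bern_intgj n k 1).const_mul _))
        ((bern_intgj n k 0).const_mul _)]
    apply intervalIntegral.integral_congr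
    intro t _
    ring
  rw [hsplit, int_bern n k 4 hk, int_bern n k 3 hk, int_bern n k 2 hk, int_bern n k 1 hk,
    int_bern n k 0 hk]
  simp only [Finset.prod_range_succ, Finset.prod_range_zero, Finset.prod_range_one]
  push_cast
  have h1 : ((n:ℝ)+1) ≠ 0 := by positivity
  have h2 : ((n:ℝ)+1+1) ≠ 0 := by positivity
  have h3 : ((n:ℝ)+1+2) ≠ 0 := by positivity
  have h4 : ((n:ℝ)+1+3) ≠ 0 := by positivity
  have h5 : ((n:ℝ)+1+4) ≠ 0 := by positivity
  field_simp
  ring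

lemma desc_cast (m : ℕ) : ∀ j : ℕ, (m.descFactorial j : ℝ) = ∏ t ∈ Finset.range j, ((m:ℝ) - t) := by
  intro j
  induction j with
  | zero => simp
  | succ j ih =>
    rw [Nat.descFactorial_succ, Finset.prod_range_succ, ← ih]
    rcases le_or_gt j m with h | h
    · push_cast [h]
      ring
    · rw [Nat.descFactorial_of_lt h]
      simp
lemma key_id (m j i : ℕ) (h : j + i ≤ m) :
    (m.choose (j+i) : ℝ) * ((j+i).descFactorial j : ℝ)
      = (m.descFactorial j : ℝ) * ((m-j).choose i : ℝ) := by
  have hji : j ≤ j + i := Nat.le_add_right j i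
  have hjm : j ≤ m := le_trans hji h
  have him : i ≤ m - j := by omega
  have hfi : (i.factorial : ℝ) ≠ 0 := by positivity
  have hfmj : ((m-j).factorial : ℝ) ≠ 0 := by positivity
  have h1 : ((j+i).descFactorial j : ℝ) = (j+i).factorial / i.factorial := by
    rw [eq_div_iff hfi]
    have := Nat.factorial_mul_descFactorial hji
    rw [show j + i - j = i by omega] at this
    exact_mod_cast congrArg (Nat.cast : ℕ → ℝ) (by rw [← this]; ring)
  have h2 : (m.descFactorial j : ℝ) = m.factorial / (m-j).factorial := by
    rw [eq_div_iff hfmj]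
    have := Nat.factorial_mul_descFactorial hjm
    exact_mod_cast congrArg (Nat.cast : ℕ → ℝ) (by rw [← this]; ring)
  rw [h1, h2, Nat.cast_choose ℝ h, Nat.cast_choose ℝ him,
    show m - j - i = m - (j+i) by omega]
  have hf1 : ((j+i).factorial : ℝ) ≠ 0 := by positivity
  have hf2 : ((m-(j+i)).factorial : ℝ) ≠ 0 := by positivity
  field_simp
lemma bern_sum_s5 (N : ℕ) (x : ℝ) :
    ∑ i ∈ Finset.range (N+1), (N.choose i : ℝ) * x ^ i * (1-x) ^ (N-i) = 1 := by
  have h := add_pow x (1-x) N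
  rw [show x + (1-x) = 1 by ring, one_pow] at h
  have e : ∑ i ∈ Finset.range (N+1), (N.choose i : ℝ) * x ^ i * (1-x) ^ (N-i)
      = ∑ i ∈ Finset.range (N+1), x ^ i * (1-x) ^ (N-i) * (N.choose i : ℝ) :=
    Finset.sum_congr rfl (fun i _ => by ring)
  rw [e, ← h]

lemma bern_moment (m j : ℕ) (x : ℝ) :
    ∑ k ∈ Finset.range (m+1),
      (m.choose k : ℝ) * x ^ k * (1-x) ^ (m-k) * (k.descFactorial j : ℝ)
    = (m.descFactorial j : ℝ) * x ^ j := by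
  rcases lt_or_ge m j with h | h
  · rw [Nat.descFactorial_of_lt h]
    rw [Finset.sum_eq_zero]
    · simp
    intro k hk
    rw [Nat.descFactorial_of_lt (lt_of_le_of_lt (Nat.lt_succ_iff.mp (Finset.mem_range.mp hk)) h)]
    simp
  · rw [Finset.range_eq_Ico, ← Finset.sum_Ico_consecutive _ (Nat.zero_le j) (by omega : j ≤ m+1)]
    have h0 : (∑ k ∈ Finset.Ico 0 j,
        (m.choose k : ℝ) * x ^ k * (1-x) ^ (m-k) * (k.descFactorial j : ℝ)) = 0 := by
      apply Finset.sum_eq_zero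
      intro k hk
      rw [Nat.descFactorial_of_lt (Finset.mem_Ico.mp hk).2]
      simp
    rw [h0, zero_add, Finset.sum_Ico_eq_sum_range, show m + 1 - j = (m-j)+1 by omega]
    have hterm : ∀ i ∈ Finset.range ((m-j)+1),
        (m.choose (j+i) : ℝ) * x ^ (j+i) * (1-x) ^ (m-(j+i)) * ((j+i).descFactorial j : ℝ)
        = (m.descFactorial j : ℝ) * x ^ j
          * ((( m-j).choose i : ℝ) * x ^ i * (1-x) ^ ((m-j)-i)) := by
      intro i hi
      have hmem : i ≤ m - j := Nat.lt_succ_iff.mp (Finset.mem_range.mp hi)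
      have e2 := key_id m j i (by omega)
      rw [show m - (j+i) = (m-j) - i by omega, pow_add]
      linear_combination (x^j * x^i * (1-x)^((m-j)-i)) * e2
    rw [Finset.sum_congr rfl hterm, ← Finset.mul_sum, bern_sum_s5 (m-j) x, mul_one]
lemma bern_combo (m : ℕ) (x c0 c1 c2 c3 c4 : ℝ) :
    ∑ k ∈ Finset.range (m+1), (m.choose k : ℝ) * x ^ k * (1-x) ^ (m-k) *
      (c0 + c1 * (k:ℝ) + c2 * ((k:ℝ) * ((k:ℝ)-1)) + c3 * ((k:ℝ) * ((k:ℝ)-1) * ((k:ℝ)-2))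
        + c4 * ((k:ℝ) * ((k:ℝ)-1) * ((k:ℝ)-2) * ((k:ℝ)-3)))
    = c0 + c1 * (m:ℝ) * x + c2 * ((m:ℝ) * ((m:ℝ)-1)) * x^2
      + c3 * ((m:ℝ) * ((m:ℝ)-1) * ((m:ℝ)-2)) * x^3
      + c4 * ((m:ℝ) * ((m:ℝ)-1) * ((m:ℝ)-2) * ((m:ℝ)-3)) * x^4 := by
  have M : ∀ j : ℕ, ∑ k ∈ Finset.range (m+1),
      (m.choose k : ℝ) * x ^ k * (1-x) ^ (m-k) * (∏ t ∈ Finset.range j, ((k:ℝ) - t))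
      = (∏ t ∈ Finset.range j, ((m:ℝ) - t)) * x ^ j := by
    intro j
    simpa only [desc_cast] using bern_moment m j x
  have M0 := M 0
  have M1 := M 1
  have M2 := M 2
  have M3 := M 3
  have M4 := M 4
  simp only [Finset.prod_range_succ, Finset.prod_range_zero, Finset.prod_range_one,
    Nat.cast_zero, Nat.cast_one, Nat.cast_ofNat, sub_zero, one_mul, mul_one, pow_zero,
    pow_one] at M0 M1 M2 M3 M4
  have step1 : ∑ k ∈ Finset.range (m+1), (m.choose k : ℝ) * x ^ k * (1-x) ^ (m-k) *
      (c0 + c1 * (k:ℝ) + c2 * ((k:ℝ) * ((k:ℝ)-1)) + c3 * ((k:ℝ) * ((k:ℝ)-1) * ((k:ℝ)-2))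
        + c4 * ((k:ℝ) * ((k:ℝ)-1) * ((k:ℝ)-2) * ((k:ℝ)-3)))
      = ∑ k ∈ Finset.range (m+1),
        (((m.choose k : ℝ) * x ^ k * (1-x) ^ (m-k)) * c0
         + ((m.choose k : ℝ) * x ^ k * (1-x) ^ (m-k) * (k:ℝ)) * c1
         + ((m.choose k : ℝ) * x ^ k * (1-x) ^ (m-k) * ((k:ℝ) * ((k:ℝ)-1))) * c2
         + ((m.choose k : ℝ) * x ^ k * (1-x) ^ (m-k) * ((k:ℝ) * ((k:ℝ)-1) * ((k:ℝ)-2))) * c3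
         + ((m.choose k : ℝ) * x ^ k * (1-x) ^ (m-k)
            * ((k:ℝ) * ((k:ℝ)-1) * ((k:ℝ)-2) * ((k:ℝ)-3))) * c4) :=
    Finset.sum_congr rfl (fun k _ => by ring)
  rw [step1, Finset.sum_add_distrib, Finset.sum_add_distrib, Finset.sum_add_distrib,
    Finset.sum_add_distrib, ← Finset.sum_mul, ← Finset.sum_mul, ← Finset.sum_mul,
    ← Finset.sum_mul, ← Finset.sum_mul, M0, M1, M2, M3, M4]
  ring

lemma bern_neg (n : ℕ) (k : ℤ) (h : k < 0) (x : ℝ) : bern n k x = 0 := by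
  unfold bern
  rw [if_neg]
  rintro ⟨h0, -⟩
  omega


end DM1aux

theorem DM1_central_moment_four (a0 a1 : ℕ → ℝ) (n : ℕ) (hn : 1 ≤ n)
    (x : ℝ) (hx : x ∈ Set.Icc (0:ℝ) 1) :
    DM1 a0 a1 n (fun t => (t - x) ^ 4) x
      = 12 / (((n : ℝ) + 2) * ((n : ℝ) + 3) * ((n : ℝ) + 4) * ((n : ℝ) + 5))
        * ((1 - x) ^ 2 * x ^ 2 * (2 * a0 n + a1 n) * (n : ℝ) ^ 2
          + 3 * (1 - x) * x * (15 * a1 n * x ^ 2 + 22 * x ^ 2 * a0 n - 15 * a1 n * x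
              - 22 * a0 n * x + 6 * a0 n + 4 * a1 n) * (n : ℝ)
          + 10 * a1 n + 12 * a0 n - 68 * a1 n * x + 124 * x ^ 4 * a0 n + 202 * x ^ 2 * a0 n
          + 114 * x ^ 4 * a1 n + 182 * a1 n * x ^ 2 - 78 * a0 n * x - 228 * a1 n * x ^ 3
          - 248 * a0 n * x ^ 3) := by
  obtain ⟨m, rfl⟩ : ∃ m, n = m + 1 := ⟨n - 1, (Nat.succ_pred_eq_of_pos hn).symm⟩
  clear hn hx
  simp only [DM1, pM1, Nat.add_sub_cancel]
  rw [show (∑ k ∈ Finset.range (m+1+1),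
        ((a1 (m+1) * x + a0 (m+1)) * bern m (↑k) x
          + (a1 (m+1) * (1 - x) + a0 (m+1)) * bern m ((↑k:ℤ) - 1) x) *
          ∫ t in (0:ℝ)..1, bern (m+1) (↑k) t * (t - x) ^ 4)
      = (a1 (m+1) * x + a0 (m+1)) * (∑ k ∈ Finset.range (m+1+1),
          bern m (↑k) x * ∫ t in (0:ℝ)..1, bern (m+1) (↑k) t * (t - x) ^ 4)
        + (a1 (m+1) * (1 - x) + a0 (m+1)) * (∑ k ∈ Finset.range (m+1+1),
          bern m ((↑k:ℤ) - 1) x * ∫ t in (0:ℝ)..1, bern (m+1) (↑k) t * (t - x) ^ 4)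
      from by
        rw [Finset.mul_sum, Finset.mul_sum, ← Finset.sum_add_distrib]
        exact Finset.sum_congr rfl fun k _ => by ring]
  have hA : (∑ k ∈ Finset.range (m+1+1),
        bern m (↑k) x * ∫ t in (0:ℝ)..1, bern (m+1) (↑k) t * (t - x) ^ 4)
      = ((24 - 120*x + 240*x^2 - 240*x^3 + 120*x^4 + (-24*x + 108*x^2 - 188*x^3 + 154*x^4)*((m:ℝ)+1) + (12*x^2 - 48*x^3 + 71*x^4)*((m:ℝ)+1)^2 + (-4*x^3 + 14*x^4)*((m:ℝ)+1)^3 + x^4*((m:ℝ)+1)^4) + (96 - 360*x + 480*x^2 - 240*x^3 + (-72*x + 216*x^2 - 188*x^3)*((m:ℝ)+1) + (24*x^2 - 48*x^3)*((m:ℝ)+1)^2 - 4*x^3*((m:ℝ)+1)^3) * (m:ℝ) * x + (72 - 180*x + 120*x^2 + (-36*x + 54*x^2)*((m:ℝ)+1) + 6*x^2*((m:ℝ)+1)^2) * ((m:ℝ) * ((m:ℝ)-1)) * x^2 + (16 - 20*x - 4*x*((m:ℝ)+1)) * ((m:ℝ) * ((m:ℝ)-1) * ((m:ℝ)-2)) *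 x^3 + (1:ℝ) * ((m:ℝ) * ((m:ℝ)-1) * ((m:ℝ)-2) * ((m:ℝ)-3)) * x^4) / ((((m:ℝ)+1)+1)*(((m:ℝ)+1)+2)*(((m:ℝ)+1)+3)*(((m:ℝ)+1)+4)*(((m:ℝ)+1)+5)) := by
    rw [Finset.sum_range_succ, bern_big m (m+1) (by omega) x, zero_mul, add_zero]
    have hterm : ∀ k ∈ Finset.range (m+1),
        bern m (↑k) x * ∫ t in (0:ℝ)..1, bern (m+1) (↑k) t * (t - x) ^ 4
        = ((m.choose k : ℝ) * x ^ k * (1-x) ^ (m-k) *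
            ((24 - 120*x + 240*x^2 - 240*x^3 + 120*x^4 + (-24*x + 108*x^2 - 188*x^3 + 154*x^4)*((m:ℝ)+1) + (12*x^2 - 48*x^3 + 71*x^4)*((m:ℝ)+1)^2 + (-4*x^3 + 14*x^4)*((m:ℝ)+1)^3 + x^4*((m:ℝ)+1)^4) + (96 - 360*x + 480*x^2 - 240*x^3 + (-72*x + 216*x^2 - 188*x^3)*((m:ℝ)+1) + (24*x^2 - 48*x^3)*((m:ℝ)+1)^2 - 4*x^3*((m:ℝ)+1)^3) * (k:ℝ) + (72 - 180*x + 120*x^2 + (-36*x + 54*x^2)*((m:ℝ)+1) + 6*x^2*((m:ℝ)+1)^2) * ((k:ℝ) * ((k:ℝ)-1)) + (16 - 20*x - 4*x*((m:ℝ)+1)) * ((k:ℝ) * ((k:ℝ)-1) * ((k:ℝ)-2)) + (1:ℝ) * ((k:ℝ) * ((k:ℝ)-1) * ((k:ℝ)-2) * ((k:ℝ)-3)))) / ((((m:ℝ)+1)+1)*(((m:ℝ)+1)+2)*(((m:ℝ)+1)+3)*(((m:ℝ)+1)+4)*(((m:ℝ)+1)+5)) := by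
      intro k hk
      have hk' : k ≤ m := Nat.lt_succ_iff.mp (Finset.mem_range.mp hk)
      rw [bern_nat m k hk' x, int_bern4 (m+1) k (by omega) x, mul_div_assoc']
      congr 1 <;> (push_cast; ring)
    rw [Finset.sum_congr rfl hterm, ← Finset.sum_div, bern_combo]
  have hB : (∑ k ∈ Finset.range (m+1+1),
        bern m ((↑k:ℤ) - 1) x * ∫ t in (0:ℝ)..1, bern (m+1) (↑k) t * (t - x) ^ 4)
      = ((120 - 480*x + 720*x^2 - 480*x^3 + 120*x^4 + (-96*x + 324*x^2 - 376*x^3 + 154*x^4)*((m:ℝ)+1) + (36*x^2 - 96*x^3 + 71*x^4)*((m:ℝ)+1)^2 + (-8*x^3 + 14*x^4)*((m:ℝ)+1)^3 + x^4*((m:ℝ)+1)^4) + (240 - 720*x + 720*x^2 - 240*x^3 + (-144*x + 324*x^2 - 188*x^3)*((m:ℝ)+1) + (36*x^2 - 48*x^3)*((m:ℝ)+1)^2 - 4*x^3*((m:ℝ)+1)^3) * (m:ℝ) * x + (120 - 240*x + 120*x^2 + (-48*x + 54*x^2)*((m:ℝ)+1) + 6*x^2*((m:ℝ)+1)^2)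 * ((m:ℝ) * ((m:ℝ)-1)) * x^2 + (20 - 20*x - 4*x*((m:ℝ)+1)) * ((m:ℝ) * ((m:ℝ)-1) * ((m:ℝ)-2)) * x^3 + (1:ℝ) * ((m:ℝ) * ((m:ℝ)-1) * ((m:ℝ)-2) * ((m:ℝ)-3)) * x^4) / ((((m:ℝ)+1)+1)*(((m:ℝ)+1)+2)*(((m:ℝ)+1)+3)*(((m:ℝ)+1)+4)*(((m:ℝ)+1)+5)) := by
    rw [Finset.sum_range_succ']
    have h0 : bern m ((↑(0:ℕ):ℤ) - 1) x = 0 := bern_neg m _ (by simp) x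
    rw [h0, zero_mul, add_zero]
    have hterm : ∀ k ∈ Finset.range (m+1),
        bern m ((↑(k+1):ℤ) - 1) x * ∫ t in (0:ℝ)..1, bern (m+1) (↑(k+1)) t * (t - x) ^ 4
        = ((m.choose k : ℝ) * x ^ k * (1-x) ^ (m-k) *
            ((120 - 480*x + 720*x^2 - 480*x^3 + 120*x^4 + (-96*x + 324*x^2 - 376*x^3 + 154*x^4)*((m:ℝ)+1) + (36*x^2 - 96*x^3 + 71*x^4)*((m:ℝ)+1)^2 + (-8*x^3 + 14*x^4)*((m:ℝ)+1)^3 + x^4*((m:ℝ)+1)^4) + (240 - 720*x + 720*x^2 - 240*x^3 + (-144*x + 324*x^2 - 188*x^3)*((m:ℝ)+1) + (36*x^2 - 48*x^3)*((m:ℝ)+1)^2 - 4*x^3*((m:ℝ)+1)^3) * (k:ℝ) + (120 - 240*x + 120*x^2 + (-48*x + 54*x^2)*((m:ℝ)+1) + 6*x^2*((m:ℝ)+1)^2) * ((k:ℝ) * ((k:ℝ)-1)) + (20 - 20*x - 4*x*((m:ℝ)+1)) * ((k:ℝ) * ((k:ℝ)-1) * ((k:ℝ)-2)) + (1:ℝ)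 * ((k:ℝ) * ((k:ℝ)-1) * ((k:ℝ)-2) * ((k:ℝ)-3)))) / ((((m:ℝ)+1)+1)*(((m:ℝ)+1)+2)*(((m:ℝ)+1)+3)*(((m:ℝ)+1)+4)*(((m:ℝ)+1)+5)) := by
      intro k hk
      have hk' : k ≤ m := Nat.lt_succ_iff.mp (Finset.mem_range.mp hk)
      have hc : ((↑(k+1):ℤ) - 1) = (↑k:ℤ) := by push_cast; ring
      rw [hc, bern_nat m k hk' x, int_bern4 (m+1) (k+1) (by omega) x, mul_div_assoc']
      congr 1 <;> (push_cast; ring)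
    rw [Finset.sum_congr rfl hterm, ← Finset.sum_div, bern_combo]
  rw [hA, hB]
  have h1 : ((m:ℝ)+1+1) ≠ 0 := by positivity
  have h2 : ((m:ℝ)+1+2) ≠ 0 := by positivity
  have h3 : ((m:ℝ)+1+3) ≠ 0 := by positivity
  have h4 : ((m:ℝ)+1+4) ≠ 0 := by positivity
  have h5 : ((m:ℝ)+1+5) ≠ 0 := by positivity
  push_cast
  field_simp
  ring
end
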